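/- arXiv:1909.11677 — 6 statements merged into one kernel-verified Lean document; each statement's English description precedes it below -/
import Mathlib

section
/- Let F be a nonempty closed convex set of density matrices containing a full-rank state. Define the generalized robustness via its dual form Rmax(ρ) = sup{⟨ρ,W⟩ : W ⪰ 0, ⟨W,σ⟩ ≤ 1 ∀σ ∈ F}. Then for any density matrix ρ, Rmax(ρ) ≥ Tr(ρ²) / max_{σ∈F} ⟨ρ,σ⟩. In particular, for a pure state ψ = |ψ⟩⟨ψ|, Rmax(ψ) ≥ 1 / max_{σ∈F} ⟨ψ,σ⟩. -/
open Matrix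
open scoped ComplexOrder

/-- Hilbert–Schmidt inner product (real part of Tr(A B)) on matrices. -/
noncomputable def ip {n : Type*} [Fintype n] (A B : Matrix n n ℂ) : ℝ := ((A * B).trace).re

/-- A density matrix: positive semidefinite with trace one. -/
def IsDensity {n : Type*} [Fintype n] (ρ : Matrix n n ℂ) : Prop := ρ.PosSemidef ∧ ρ.trace = 1

/-- A pure state: a rank-one (trace-one) projection. -/
def IsPure {n : Type*} [Fintype n] (P : Matrix n n ℂ) : Prop := IsDensity P ∧ P * P = P

/-- Generalized robustness, dual form. -/
noncomputable def Rmax {n : Type*} [Fintype n] (F : Set (Matrix n n ℂ)) (ρ : Matrix n n ℂ) : ℝ :=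
  sSup {x : ℝ | ∃ W : Matrix n n ℂ, W.PosSemidef ∧ (∀ σ ∈ F, ip W σ ≤ 1) ∧ x = ip ρ W}

/-- Maximal overlap with the free set. -/
noncomputable def RminInv {n : Type*} [Fintype n] (F : Set (Matrix n n ℂ)) (φ : Matrix n n ℂ) : ℝ :=
  sSup {x : ℝ | ∃ σ ∈ F, x = ip φ σ}

/-- Rmin: reciprocal of maximal overlap with the free set. -/
noncomputable def Rmin {n : Type*} [Fintype n] (F : Set (Matrix n n ℂ)) (φ : Matrix n n ℂ) : ℝ :=
  1 / RminInv F φ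

namespace Stmt3Aux

variable {n : Type*} [Fintype n] [DecidableEq n]

lemma re_trace_nonneg {A : Matrix n n ℂ} (hA : A.PosSemidef) : 0 ≤ (A.trace).re := by
  rw [Matrix.trace, Complex.re_sum]
  refine Finset.sum_nonneg fun i _ => ?_
  have h := hA.dotProduct_mulVec_nonneg (Pi.single i 1)
  have : star (Pi.single i 1 : n → ℂ) ⬝ᵥ A *ᵥ Pi.single i 1 = A i i := by
    simp [dotProduct, Matrix.mulVec, Pi.single_apply, Finset.sum_ite_eq]
  rw [this] at h
  exact (Complex.le_def.mp h).1

lemma trace_mul_nonneg {A B : Matrix n n ℂ} (hA : A.PosSemidef) (hB : B.PosSemidef) :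
    0 ≤ ((A * B).trace).re := by
  obtain ⟨C, rfl⟩ : ∃ C : Matrix n n ℂ, A = Cᴴ * C := by
    open scoped MatrixOrder in exact CStarAlgebra.nonneg_iff_eq_star_mul_self.mp hA.nonneg
  have h1 : (Cᴴ * C * B).trace = (C * B * Cᴴ).trace := by
    rw [Matrix.mul_assoc, Matrix.trace_mul_comm]
  rw [h1]
  exact re_trace_nonneg (hB.mul_mul_conjTranspose_same C)

lemma conj_one {U : Matrix n n ℂ} (hU : U ∈ Matrix.unitaryGroup n ℂ) (c : ℂ) :
    U * (c • (1 : Matrix n n ℂ)) * star U = c • 1 := by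
  rw [Matrix.mul_smul, Matrix.mul_one, Matrix.smul_mul, (Matrix.mem_unitaryGroup_iff).mp hU]

set_option linter.unusedSectionVars false in
lemma diag_sub_smul (f : n → ℂ) (c : ℂ) :
    diagonal f - c • (1 : Matrix n n ℂ) = diagonal (fun i => f i - c) := by
  ext i j
  by_cases h : i = j <;> simp [Matrix.diagonal_apply, Matrix.one_apply, h]

set_option linter.unusedSectionVars false in
lemma smul_sub_diag (f : n → ℂ) (c : ℂ) :
    c • (1 : Matrix n n ℂ) - diagonal f = diagonal (fun i => c - f i) := by
  ext i j
  by_cases h : i = j <;> simp [Matrix.diagonal_apply, Matrix.one_apply, h]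

lemma posSemidef_sub_smul {A : Matrix n n ℂ} (hA : A.IsHermitian) (c : ℝ)
    (h : ∀ i, c ≤ hA.eigenvalues i) : (A - (c : ℂ) • 1).PosSemidef := by
  have hU := conj_one hA.eigenvectorUnitary.2 (c : ℂ)
  have key : A - (c : ℂ) • 1 = (hA.eigenvectorUnitary : Matrix n n ℂ) *
      diagonal (fun i => ((hA.eigenvalues i : ℂ)) - c) *
      star (hA.eigenvectorUnitary : Matrix n n ℂ) := by
    conv_lhs => rw [hA.spectral_theorem, Unitary.conjStarAlgAut_apply, ← hU]
    rw [← Matrix.sub_mul, ← Matrix.mul_sub, diag_sub_smul]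
    rfl
  rw [key, Matrix.star_eq_conjTranspose]
  refine (Matrix.posSemidef_diagonal_iff.mpr fun i => ?_).mul_mul_conjTranspose_same _
  have : ((hA.eigenvalues i : ℂ)) - c = ((hA.eigenvalues i - c : ℝ) : ℂ) := by push_cast; ring
  rw [this]
  exact_mod_cast sub_nonneg.mpr (h i)

lemma posSemidef_smul_sub {A : Matrix n n ℂ} (hA : A.IsHermitian) (c : ℝ)
    (h : ∀ i, hA.eigenvalues i ≤ c) : ((c : ℂ) • 1 - A).PosSemidef := by
  have hU := conj_one hA.eigenvectorUnitary.2 (c : ℂ)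
  have key : (c : ℂ) • 1 - A = (hA.eigenvectorUnitary : Matrix n n ℂ) *
      diagonal (fun i => (c : ℂ) - (hA.eigenvalues i : ℂ)) *
      star (hA.eigenvectorUnitary : Matrix n n ℂ) := by
    conv_lhs => rw [hA.spectral_theorem, Unitary.conjStarAlgAut_apply, ← hU]
    rw [← Matrix.sub_mul, ← Matrix.mul_sub, smul_sub_diag]
    rfl
  rw [key, Matrix.star_eq_conjTranspose]
  refine (Matrix.posSemidef_diagonal_iff.mpr fun i => ?_).mul_mul_conjTranspose_same _
  have : (c : ℂ) - (hA.eigenvalues i : ℂ) = ((c - hA.eigenvalues i : ℝ) : ℂ) := by push_cast; ring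
  rw [this]
  exact_mod_cast sub_nonneg.mpr (h i)

lemma sum_eigenvalues_eq_trace {A : Matrix n n ℂ} (hA : A.IsHermitian) :
    (∑ i, (hA.eigenvalues i : ℂ)) = A.trace := by
  conv_rhs => rw [hA.spectral_theorem, Unitary.conjStarAlgAut_apply]
  rw [Matrix.trace_mul_cycle, (Matrix.mem_unitaryGroup_iff').mp hA.eigenvectorUnitary.2,
    Matrix.one_mul, Matrix.trace_diagonal]
  rfl

end Stmt3Aux

open Stmt3Aux

/-- Lower bound on the generalized robustness: Rmax(ρ) ≥ Tr(ρ²)/max overlap,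
and in particular Rmax(ψ) ≥ 1/max overlap for pure ψ. -/
theorem stmt3 {d : ℕ} (F : Set (Matrix (Fin d) (Fin d) ℂ))
    (hne : F.Nonempty) (hcl : IsClosed F) (hconv : Convex ℝ F)
    (hdens : ∀ σ ∈ F, IsDensity σ)
    (τ : Matrix (Fin d) (Fin d) ℂ) (hτF : τ ∈ F) (hτ : τ.PosDef)
    (ρ : Matrix (Fin d) (Fin d) ℂ) (hρ : IsDensity ρ)
    (m : ℝ) (hm0 : 0 < m) (hub : ∀ σ ∈ F, ip ρ σ ≤ m) (hach : ∃ σ ∈ F, ip ρ σ = m) :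
    Rmax F ρ ≥ ip ρ ρ / m ∧ (ρ * ρ = ρ → Rmax F ρ ≥ 1 / m) := by
  classical
  rcases Nat.eq_zero_or_pos d with hd0 | hd
  · exfalso
    have h1 := (hdens τ hτF).2
    subst hd0
    simp [Matrix.trace] at h1
  -- The feasible set for the dual problem
  have hmem : ip ρ ρ / m ∈
      {x : ℝ | ∃ W : Matrix (Fin d) (Fin d) ℂ, W.PosSemidef ∧ (∀ σ ∈ F, ip W σ ≤ 1)
        ∧ x = ip ρ W} := by
    refine ⟨((1/m : ℝ) : ℂ) • ρ, posSemidef_iff_dotProduct_mulVec.mpr ⟨?_, ?_⟩, ?_, ?_⟩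
    · show (((1/m : ℝ) : ℂ) • ρ)ᴴ = _
      rw [Matrix.conjTranspose_smul, hρ.1.1.eq]
      norm_num
    · intro x
      rw [Matrix.smul_mulVec, dotProduct_smul, smul_eq_mul]
      have h0 : (0:ℂ) ≤ ((1/m : ℝ) : ℂ) := by
        rw [Complex.zero_le_real]; positivity
      exact mul_nonneg h0 (hρ.1.dotProduct_mulVec_nonneg x)
    · intro σ hσ
      have : ip (((1/m : ℝ) : ℂ) • ρ) σ = (1/m) * ip ρ σ := by
        unfold ip
        rw [Matrix.smul_mul, Matrix.trace_smul, smul_eq_mul, Complex.re_ofReal_mul]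
      rw [this]
      calc (1/m) * ip ρ σ ≤ (1/m) * m := by
            apply mul_le_mul_of_nonneg_left (hub σ hσ) (by positivity)
        _ = 1 := by field_simp
    · unfold ip
      rw [Matrix.mul_smul, Matrix.trace_smul, smul_eq_mul, Complex.re_ofReal_mul]
      ring
  -- Boundedness of the dual feasible values
  have hne' : (Finset.univ : Finset (Fin d)).Nonempty := ⟨⟨0, hd⟩, Finset.mem_univ _⟩
  obtain ⟨i₀, -, hi₀⟩ := Finset.exists_mem_eq_inf' hne' hτ.1.eigenvalues
  have hε : 0 < Finset.univ.inf' hne' hτ.1.eigenvalues := by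
    rw [hi₀]; exact hτ.eigenvalues_pos i₀
  set ε := Finset.univ.inf' hne' hτ.1.eigenvalues with hεdef
  have hτε : (τ - (ε : ℂ) • 1).PosSemidef :=
    posSemidef_sub_smul hτ.1 ε (fun i => Finset.inf'_le _ (Finset.mem_univ i))
  have hρ1 : ((1 : ℂ) • 1 - ρ).PosSemidef := by
    refine posSemidef_smul_sub hρ.1.1 1 (fun i => ?_)
    have hsum : (∑ j, hρ.1.1.eigenvalues j) = 1 := by
      have h2 : ((∑ j, hρ.1.1.eigenvalues j : ℝ) : ℂ) = 1 := by
        push_cast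
        exact (sum_eigenvalues_eq_trace hρ.1.1).trans hρ.2
      exact_mod_cast h2
    calc hρ.1.1.eigenvalues i ≤ ∑ j, hρ.1.1.eigenvalues j :=
          Finset.single_le_sum (fun j _ => hρ.1.eigenvalues_nonneg j) (Finset.mem_univ i)
      _ = 1 := hsum
  have hbdd : BddAbove {x : ℝ | ∃ W : Matrix (Fin d) (Fin d) ℂ, W.PosSemidef ∧
      (∀ σ ∈ F, ip W σ ≤ 1) ∧ x = ip ρ W} := by
    refine ⟨1/ε, fun x hx => ?_⟩
    obtain ⟨W, hW, hWF, rfl⟩ := hx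
    have h1 : ip ρ W ≤ (W.trace).re := by
      have h := trace_mul_nonneg hρ1 hW
      have heq : (((1:ℂ) • 1 - ρ) * W).trace = W.trace - (ρ * W).trace := by
        rw [Matrix.sub_mul, Matrix.trace_sub, one_smul, Matrix.one_mul]
      rw [heq, Complex.sub_re] at h
      unfold ip
      linarith
    have h2 : ε * (W.trace).re ≤ 1 := by
      have h := trace_mul_nonneg hτε hW
      have heq : ((τ - (ε:ℂ) • 1) * W).trace = (τ * W).trace - (ε:ℂ) * W.trace := by
        rw [Matrix.sub_mul, Matrix.trace_sub, Matrix.smul_mul, Matrix.trace_smul, smul_eq_mul, Matrix.one_mul]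
      rw [heq, Complex.sub_re, Complex.re_ofReal_mul] at h
      have h3 : ((τ * W).trace).re ≤ 1 := by
        have := hWF τ hτF
        unfold ip at this
        rwa [Matrix.trace_mul_comm] at this
      linarith
    calc ip ρ W ≤ (W.trace).re := h1
      _ ≤ 1/ε := by rw [le_div_iff₀ hε]; linarith [mul_comm ε ((W.trace).re)]
  have hfirst : Rmax F ρ ≥ ip ρ ρ / m := le_csSup hbdd hmem
  refine ⟨hfirst, fun hpure => ?_⟩
  have : ip ρ ρ = 1 := by
    unfold ip
    rw [hpure, hρ.2, Complex.one_re]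
  rwa [this] at hfirst
end

section
/- Let F be a nonempty compact convex set of density matrices containing a full-rank state, and let Rmax(ρ) = sup{⟨ρ,W⟩ : W ⪰ 0, ⟨W,σ⟩ ≤ 1 ∀σ∈F}. Suppose M = Rmax(ρ̃) is the maximum value of Rmax over all density matrices, achieved at the state ρ̃ with optimal witness W (W ⪰ 0, W ∈ F°, ⟨W,ρ̃⟩ = M). Then W ⪯ M·𝟙, and every unit vector |ψ⟩ in the support of ρ̃ is an eigenvector of W with eigenvalue M; consequently W = M·Π_{ρ̃} + G for some G ⪰ 0 whose support lies in the kernel of ρ̃, where Π_{ρ̃} is the orthogonal projection onto the support of ρ̃. -/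
open Matrix
open scoped ComplexOrder

set_option linter.unusedSectionVars false
set_option linter.unusedVariables false

section Helpers
variable {n : Type*} [Fintype n] [DecidableEq n]

lemma myDiag_nonneg {A : Matrix n n ℂ} (hA : A.PosSemidef) (i : n) : 0 ≤ A i i := by
  exact hA.diag_nonneg

lemma myTrace_re_nonneg {A : Matrix n n ℂ} (hA : A.PosSemidef) : 0 ≤ (A.trace).re := by
  rw [Matrix.trace, Complex.re_sum]
  exact Finset.sum_nonneg fun i _ => (Complex.le_def.mp (myDiag_nonneg hA i)).1

open scoped MatrixOrder in
lemma myPsd_eq {A : Matrix n n ℂ} (hA : A.PosSemidef) : ∃ B : Matrix n n ℂ, A = Bᴴ * B := by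
  obtain ⟨B, rfl⟩ := CStarAlgebra.nonneg_iff_eq_star_mul_self.mp hA.nonneg
  exact ⟨B, rfl⟩

lemma myTrace_mul_re_nonneg {A B : Matrix n n ℂ} (hA : A.PosSemidef) (hB : B.PosSemidef) :
    0 ≤ ((A * B).trace).re := by
  obtain ⟨C, rfl⟩ := myPsd_eq hA
  rw [Matrix.mul_assoc, Matrix.trace_mul_comm]
  exact myTrace_re_nonneg (hB.mul_mul_conjTranspose_same C)

lemma myTrace_conjT_self (X : Matrix n n ℂ) :
    ((Xᴴ * X).trace).re = ∑ j, ∑ i, Complex.normSq (X i j) := by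
  rw [Matrix.trace, Complex.re_sum]
  congr 1; funext j
  rw [Matrix.diag, Matrix.mul_apply, Complex.re_sum]
  congr 1; funext i
  simp [Matrix.conjTranspose_apply, RCLike.star_def, ← Complex.normSq_eq_conj_mul_self]

lemma myEq_zero_of_trace (X : Matrix n n ℂ) (h : ((Xᴴ * X).trace).re = 0) : X = 0 := by
  rw [myTrace_conjT_self] at h
  ext i j
  have h1 : ∀ j ∈ Finset.univ, (0:ℝ) ≤ ∑ i, Complex.normSq (X i j) :=
    fun j _ => Finset.sum_nonneg fun i _ => Complex.normSq_nonneg _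
  have h2 := (Finset.sum_eq_zero_iff_of_nonneg h1).mp h j (Finset.mem_univ j)
  have h3 := (Finset.sum_eq_zero_iff_of_nonneg
    (fun i _ => Complex.normSq_nonneg (X i j))).mp h2 i (Finset.mem_univ i)
  simpa using Complex.normSq_eq_zero.mp h3

lemma myMul_eq_zero {A B : Matrix n n ℂ} (hA : A.PosSemidef) (hB : B.PosSemidef)
    (h : ((A * B).trace).re = 0) : A * B = 0 := by
  obtain ⟨C, rfl⟩ := myPsd_eq hA
  obtain ⟨D, rfl⟩ := myPsd_eq hB
  have key : ((C * Dᴴ)ᴴ * (C * Dᴴ)).trace = (Cᴴ * C * (Dᴴ * D)).trace := by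
    rw [conjTranspose_mul, conjTranspose_conjTranspose, Matrix.mul_assoc,
      Matrix.trace_mul_comm]
    simp only [Matrix.mul_assoc]
  have hX : C * Dᴴ = 0 := myEq_zero_of_trace _ (by rw [key]; exact h)
  calc Cᴴ * C * (Dᴴ * D) = Cᴴ * (C * Dᴴ) * D := by simp only [Matrix.mul_assoc]
    _ = 0 := by rw [hX, Matrix.mul_zero, Matrix.zero_mul]

lemma myMat_ext {A B : Matrix n n ℂ} (h : ∀ y, A *ᵥ y = B *ᵥ y) : A = B := by
  ext i j
  have := congrFun (h (Pi.single j 1)) i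
  simpa using this

lemma mySum_eig {A : Matrix n n ℂ} (hA : A.IsHermitian) :
    ∑ i, hA.eigenvalues i = A.trace.re := by
  conv_rhs => rw [hA.spectral_theorem, Unitary.conjStarAlgAut_apply]
  rw [Matrix.trace_mul_cycle, Unitary.coe_star_mul_self,
    Matrix.one_mul, Matrix.trace_diagonal, Complex.re_sum]
  simp

lemma mySmul_one_sub_psd {A : Matrix n n ℂ} (hA : A.IsHermitian) {c : ℝ}
    (h : ∀ i, hA.eigenvalues i ≤ c) : (c • (1 : Matrix n n ℂ) - A).PosSemidef := by
  set V : Matrix n n ℂ := (hA.eigenvectorUnitary : Matrix n n ℂ)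
  have hV : V * Vᴴ = 1 := by
    rw [← Matrix.star_eq_conjTranspose]
    exact Matrix.mem_unitaryGroup_iff.mp hA.eigenvectorUnitary.2
  have key : c • (1 : Matrix n n ℂ) - A
      = V * (Matrix.diagonal fun i => ((c - hA.eigenvalues i : ℝ) : ℂ)) * Vᴴ := by
    have hd : (Matrix.diagonal fun i => ((c - hA.eigenvalues i : ℝ) : ℂ))
        = c • (1 : Matrix n n ℂ) - Matrix.diagonal (RCLike.ofReal ∘ hA.eigenvalues) := by
      ext i j
      by_cases hij : i = j
      · subst hij
        simp only [Matrix.diagonal_apply_eq, Matrix.sub_apply, Matrix.smul_apply,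
          Matrix.one_apply_eq, Function.comp_apply]
        rw [Complex.real_smul, mul_one]
        push_cast [Complex.coe_algebraMap]
        ring
      · simp [Matrix.diagonal_apply_ne _ hij, Matrix.one_apply_ne hij]
    rw [hd, Matrix.mul_sub, Matrix.sub_mul, mul_smul_comm, Matrix.mul_one,
      smul_mul_assoc, hV]
    congr 1
    conv_lhs => rw [hA.spectral_theorem, Unitary.conjStarAlgAut_apply]
    rw [Matrix.star_eq_conjTranspose]
  rw [key]
  refine Matrix.PosSemidef.mul_mul_conjTranspose_same ?_ V
  refine Matrix.PosSemidef.diagonal fun i => ?_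
  exact Complex.zero_le_real.mpr (sub_nonneg.mpr (h i))

lemma mySub_smul_one_psd {A : Matrix n n ℂ} (hA : A.IsHermitian) {c : ℝ}
    (h : ∀ i, c ≤ hA.eigenvalues i) : (A - c • (1 : Matrix n n ℂ)).PosSemidef := by
  set V : Matrix n n ℂ := (hA.eigenvectorUnitary : Matrix n n ℂ)
  have hV : V * Vᴴ = 1 := by
    rw [← Matrix.star_eq_conjTranspose]
    exact Matrix.mem_unitaryGroup_iff.mp hA.eigenvectorUnitary.2
  have key : A - c • (1 : Matrix n n ℂ)
      = V * (Matrix.diagonal fun i => ((hA.eigenvalues i - c : ℝ) : ℂ)) * Vᴴ := by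
    have hd : (Matrix.diagonal fun i => ((hA.eigenvalues i - c : ℝ) : ℂ))
        = Matrix.diagonal (RCLike.ofReal ∘ hA.eigenvalues) - c • (1 : Matrix n n ℂ) := by
      ext i j
      by_cases hij : i = j
      · subst hij
        simp only [Matrix.diagonal_apply_eq, Matrix.sub_apply, Matrix.smul_apply,
          Matrix.one_apply_eq, Function.comp_apply]
        rw [Complex.real_smul, mul_one]
        push_cast [Complex.coe_algebraMap]
        ring
      · simp [Matrix.diagonal_apply_ne _ hij, Matrix.one_apply_ne hij]
    rw [hd, Matrix.mul_sub, Matrix.sub_mul, mul_smul_comm, Matrix.mul_one,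
      smul_mul_assoc, hV]
    congr 1
    conv_lhs => rw [hA.spectral_theorem, Unitary.conjStarAlgAut_apply]
    rw [Matrix.star_eq_conjTranspose]
  rw [key]
  refine Matrix.PosSemidef.mul_mul_conjTranspose_same ?_ V
  refine Matrix.PosSemidef.diagonal fun i => ?_
  exact Complex.zero_le_real.mpr (sub_nonneg.mpr (h i))

lemma mySmul_psd {A : Matrix n n ℂ} (hA : A.PosSemidef) {c : ℝ} (hc : 0 ≤ c) :
    (c • A).PosSemidef := by
  refine Matrix.PosSemidef.of_dotProduct_mulVec_nonneg ?_ ?_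
  · rw [Matrix.IsHermitian, Matrix.conjTranspose_smul, hA.1.eq, star_trivial]
  · intro x
    rw [Matrix.smul_mulVec, dotProduct_smul]
    have := hA.dotProduct_mulVec_nonneg x
    rw [Complex.real_smul]
    exact mul_nonneg (Complex.zero_le_real.mpr hc) this

lemma myTrace_vecMulVec_mul (x y : n → ℂ) (B : Matrix n n ℂ) :
    (Matrix.vecMulVec x y * B).trace = y ⬝ᵥ (B *ᵥ x) := by
  simp only [Matrix.trace, Matrix.diag, Matrix.mul_apply, Matrix.vecMulVec_apply,
    dotProduct, Matrix.mulVec, dotProduct]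
  rw [Finset.sum_comm]
  congr 1; funext k
  rw [Finset.mul_sum]
  congr 1; funext j
  ring

lemma myVecMulVec_psd (x : n → ℂ) : (Matrix.vecMulVec x (star x)).PosSemidef := by
  refine Matrix.PosSemidef.of_dotProduct_mulVec_nonneg ?_ ?_
  · ext i j
    simp [Matrix.vecMulVec_apply, mul_comm]
  · intro y
    have h1 : Matrix.vecMulVec x (star x) *ᵥ y = (star x ⬝ᵥ y) • x := by
      funext i
      simp only [Matrix.mulVec, Matrix.vecMulVec_apply, dotProduct, Pi.smul_apply,
        smul_eq_mul]
      rw [Finset.sum_mul]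
      exact Finset.sum_congr rfl fun k _ => by ring
    rw [h1, dotProduct_smul, smul_eq_mul]
    have hconj : star y ⬝ᵥ x = star (star x ⬝ᵥ y) := by
      simp only [dotProduct, star_sum, star_mul', star_star, Pi.star_apply]
      exact Finset.sum_congr rfl fun k _ => mul_comm _ _
    rw [hconj]
    exact mul_star_self_nonneg _
end Helpers

/-- Structure of an optimal robustness witness at a state maximizing Rmax:
W ⪯ M𝟙, every vector in the support of ρ is an eigenvector of W with eigenvalue M,
and W = M Π_ρ + G with supp(G) ⊆ ker(ρ). -/
theorem stmt4 {d : ℕ} (F : Set (Matrix (Fin d) (Fin d) ℂ))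
    (hne : F.Nonempty) (hcomp : IsCompact F) (hconv : Convex ℝ F)
    (hdens : ∀ σ ∈ F, IsDensity σ)
    (τ : Matrix (Fin d) (Fin d) ℂ) (hτF : τ ∈ F) (hτ : τ.PosDef)
    (ρ W : Matrix (Fin d) (Fin d) ℂ) (hρ : IsDensity ρ) (M : ℝ)
    (hWpsd : W.PosSemidef) (hWfeas : ∀ σ ∈ F, ip W σ ≤ 1) (hWval : ip ρ W = M)
    (hRmaxρ : Rmax F ρ = M)
    (hMmax : ∀ σ, IsDensity σ → Rmax F σ ≤ M)
    (P : Matrix (Fin d) (Fin d) ℂ) (hPh : P.IsHermitian) (hPproj : P * P = P)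
    (hPrange : LinearMap.range P.mulVecLin = LinearMap.range ρ.mulVecLin) :
    (M • (1 : Matrix (Fin d) (Fin d) ℂ) - W).PosSemidef ∧
      (∀ ψ : Fin d → ℂ, ψ ∈ LinearMap.range ρ.mulVecLin → W.mulVec ψ = M • ψ) ∧
      ∃ G : Matrix (Fin d) (Fin d) ℂ, G.PosSemidef ∧
        LinearMap.range G.mulVecLin ≤ LinearMap.ker ρ.mulVecLin ∧ W = M • P + G := by
  classical
  haveI hne' : Nonempty (Fin d) := by
    rcases isEmpty_or_nonempty (Fin d) with h | h
    · exact absurd hρ.2 (by rw [Matrix.trace_eq_zero_of_isEmpty]; exact zero_ne_one)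
    · exact h
  obtain ⟨i₀, -, hi₀⟩ := Finset.exists_min_image Finset.univ hτ.1.eigenvalues
    ⟨Classical.arbitrary (Fin d), Finset.mem_univ _⟩
  set ε : ℝ := hτ.1.eigenvalues i₀ with hεdef
  have hε : 0 < ε := hτ.eigenvalues_pos i₀
  have hτε : (τ - ε • (1 : Matrix (Fin d) (Fin d) ℂ)).PosSemidef :=
    mySub_smul_one_psd hτ.1 fun i => hi₀ i (Finset.mem_univ i)
  have hone_sub : ∀ σ : Matrix (Fin d) (Fin d) ℂ, IsDensity σ →
      ((1 : Matrix (Fin d) (Fin d) ℂ) - σ).PosSemidef := by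
    intro σ hσ
    have heig : ∀ i, hσ.1.1.eigenvalues i ≤ 1 := by
      intro i
      have hsum : ∑ j, hσ.1.1.eigenvalues j = 1 := by
        rw [mySum_eig hσ.1.1, hσ.2]; simp
      calc hσ.1.1.eigenvalues i ≤ ∑ j, hσ.1.1.eigenvalues j :=
            Finset.single_le_sum (fun j _ => hσ.1.eigenvalues_nonneg j) (Finset.mem_univ i)
        _ = 1 := hsum
    have := mySmul_one_sub_psd hσ.1.1 heig
    simpa using this
  have hub : ∀ σ : Matrix (Fin d) (Fin d) ℂ, IsDensity σ →
      ∀ W' : Matrix (Fin d) (Fin d) ℂ, W'.PosSemidef → (∀ ω ∈ F, ip W' ω ≤ 1) →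
      ip σ W' ≤ ε⁻¹ := by
    intro σ hσ W' hW' hfeas
    have h1 : ip σ W' ≤ W'.trace.re := by
      have h0 := myTrace_mul_re_nonneg (hone_sub σ hσ) hW'
      rw [Matrix.sub_mul, Matrix.one_mul, Matrix.trace_sub, Complex.sub_re] at h0
      unfold ip
      linarith
    have h2 : ε * W'.trace.re ≤ 1 := by
      have h0 := myTrace_mul_re_nonneg hτε hW'
      rw [Matrix.sub_mul, smul_mul_assoc, Matrix.one_mul, Matrix.trace_sub,
        Matrix.trace_smul, Complex.sub_re, Complex.smul_re] at h0
      have h3 : ((τ * W').trace).re ≤ 1 := by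
        have h4 := hfeas τ hτF
        unfold ip at h4
        rwa [Matrix.trace_mul_comm] at h4
      simp only [smul_eq_mul] at h0
      linarith
    have h4 : W'.trace.re ≤ ε⁻¹ := by
      have h5 := mul_le_mul_of_nonneg_left h2 (le_of_lt (inv_pos.mpr hε))
      rwa [← mul_assoc, inv_mul_cancel₀ hε.ne', one_mul, mul_one] at h5
    linarith
  have hkey : ∀ σ : Matrix (Fin d) (Fin d) ℂ, IsDensity σ → ip σ W ≤ M := by
    intro σ hσ
    have hbdd : BddAbove {x : ℝ | ∃ W' : Matrix (Fin d) (Fin d) ℂ,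
        W'.PosSemidef ∧ (∀ ω ∈ F, ip W' ω ≤ 1) ∧ x = ip σ W'} := by
      refine ⟨ε⁻¹, ?_⟩
      rintro x ⟨W', hW', hfeas, rfl⟩
      exact hub σ hσ W' hW' hfeas
    have hmem : ip σ W ∈ {x : ℝ | ∃ W' : Matrix (Fin d) (Fin d) ℂ,
        W'.PosSemidef ∧ (∀ ω ∈ F, ip W' ω ≤ 1) ∧ x = ip σ W'} := ⟨W, hWpsd, hWfeas, rfl⟩
    have h5 : ip σ W ≤ Rmax F σ := by
      unfold Rmax
      exact le_csSup hbdd hmem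
    exact le_trans h5 (hMmax σ hσ)
  have part1 : (M • (1 : Matrix (Fin d) (Fin d) ℂ) - W).PosSemidef := by
    refine Matrix.PosSemidef.of_dotProduct_mulVec_nonneg ?_ ?_
    · have h1 : (M • (1 : Matrix (Fin d) (Fin d) ℂ)).IsHermitian := by
        rw [Matrix.IsHermitian, Matrix.conjTranspose_smul, Matrix.conjTranspose_one,
          star_trivial]
      exact h1.sub hWpsd.1
    · intro x
      by_cases hx : x = 0
      · simp [hx]
      · set r : ℝ := ∑ i, Complex.normSq (x i) with hrdef
        have hxne : ∃ i, x i ≠ 0 := by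
          by_contra hall
          push_neg at hall
          exact hx (funext hall)
        obtain ⟨i₁, hi₁⟩ := hxne
        have hr : 0 < r :=
          Finset.sum_pos' (fun i _ => Complex.normSq_nonneg _)
            ⟨i₁, Finset.mem_univ _, Complex.normSq_pos.mpr hi₁⟩
        set ω : Matrix (Fin d) (Fin d) ℂ := (r⁻¹ : ℝ) • Matrix.vecMulVec x (star x) with hω
        have htrv : (Matrix.vecMulVec x (star x)).trace = (r : ℂ) := by
          rw [Matrix.trace]
          simp only [Matrix.diag, Matrix.vecMulVec_apply, Pi.star_apply, RCLike.star_def,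
            Complex.mul_conj, hrdef]
          norm_cast
        have hωdens : IsDensity ω := by
          constructor
          · exact mySmul_psd (myVecMulVec_psd x) (le_of_lt (inv_pos.mpr hr))
          · rw [hω, Matrix.trace_smul, htrv, Complex.real_smul, ← Complex.ofReal_mul,
              inv_mul_cancel₀ hr.ne']
            simp
        have hle := hkey ω hωdens
        have hiple : ip ω W = r⁻¹ * ((star x ⬝ᵥ W *ᵥ x).re) := by
          unfold ip
          rw [hω, smul_mul_assoc, Matrix.trace_smul, Complex.smul_re,
            myTrace_vecMulVec_mul, smul_eq_mul]
        have hre : (star x ⬝ᵥ W *ᵥ x).re ≤ M * r := by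
          rw [hiple] at hle
          have h6 := mul_le_mul_of_nonneg_left hle (le_of_lt hr)
          rwa [← mul_assoc, mul_inv_cancel₀ hr.ne', one_mul, mul_comm r M] at h6
        have h0 := hWpsd.dotProduct_mulVec_nonneg x
        have him : (star x ⬝ᵥ W *ᵥ x).im = 0 := by
          simpa using (Complex.le_def.mp h0).2.symm
        have hdot : star x ⬝ᵥ x = (r : ℂ) := by
          simp only [dotProduct, Pi.star_apply, RCLike.star_def, hrdef]
          push_cast
          exact Finset.sum_congr rfl fun i _ => by rw [Complex.normSq_eq_conj_mul_self]
        rw [Matrix.sub_mulVec, dotProduct_sub, Matrix.smul_mulVec,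
          Matrix.one_mulVec, dotProduct_smul, hdot, Complex.le_def]
        constructor
        · simp only [Complex.zero_re, Complex.sub_re, Complex.smul_re, Complex.ofReal_re,
            smul_eq_mul]
          linarith
        · simp [Complex.sub_im, Complex.smul_im, him]
  have htr0 : ((((M • (1 : Matrix (Fin d) (Fin d) ℂ)) - W) * ρ).trace).re = 0 := by
    rw [Matrix.sub_mul, smul_mul_assoc, Matrix.one_mul, Matrix.trace_sub, Matrix.trace_smul,
      hρ.2, Complex.sub_re, Complex.smul_re]
    have hWρtr : ((W * ρ).trace).re = M := by
      rw [Matrix.trace_mul_comm]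
      exact hWval
    rw [hWρtr]
    simp
  have hAρ : ((M • (1 : Matrix (Fin d) (Fin d) ℂ)) - W) * ρ = 0 :=
    myMul_eq_zero part1 hρ.1 htr0
  have part2 : ∀ ψ : Fin d → ℂ, ψ ∈ LinearMap.range ρ.mulVecLin → W.mulVec ψ = M • ψ := by
    rintro ψ ⟨y, rfl⟩
    have h : ((M • (1 : Matrix (Fin d) (Fin d) ℂ)) - W) *ᵥ (ρ *ᵥ y) = 0 := by
      rw [Matrix.mulVec_mulVec, hAρ, Matrix.zero_mulVec]
    rw [Matrix.sub_mulVec, Matrix.smul_mulVec, Matrix.one_mulVec, sub_eq_zero] at h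
    simpa [Matrix.mulVecLin_apply] using h.symm
  have hWρ : W * ρ = M • ρ := by
    have h := hAρ
    rw [Matrix.sub_mul, smul_mul_assoc, Matrix.one_mul, sub_eq_zero] at h
    exact h.symm
  have hρW : ρ * W = M • ρ := by
    have h := congrArg Matrix.conjTranspose hWρ
    rwa [Matrix.conjTranspose_mul, hWpsd.1.eq, hρ.1.1.eq, Matrix.conjTranspose_smul,
      star_trivial, hρ.1.1.eq] at h
  have hPρ : P * ρ = ρ := by
    apply myMat_ext
    intro y
    rw [← Matrix.mulVec_mulVec]
    have hmem : ρ *ᵥ y ∈ LinearMap.range P.mulVecLin := by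
      rw [hPrange]; exact ⟨y, rfl⟩
    obtain ⟨u, hu⟩ := hmem
    have hu' : P *ᵥ u = ρ *ᵥ y := hu
    rw [← hu', Matrix.mulVec_mulVec, hPproj]
  have hρP : ρ * P = ρ := by
    have h := congrArg Matrix.conjTranspose hPρ
    rwa [Matrix.conjTranspose_mul, hPh.eq, hρ.1.1.eq] at h
  have hWP : W * P = M • P := by
    apply myMat_ext
    intro y
    rw [← Matrix.mulVec_mulVec, Matrix.smul_mulVec]
    exact part2 (P *ᵥ y) (by rw [← hPrange]; exact ⟨y, rfl⟩)
  have hPW : P * W = M • P := by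
    have h := congrArg Matrix.conjTranspose hWP
    rwa [Matrix.conjTranspose_mul, hPh.eq, hWpsd.1.eq, Matrix.conjTranspose_smul,
      star_trivial, hPh.eq] at h
  have hG : W - M • P = (1 - P) * W * (1 - P)ᴴ := by
    have h1P : ((1 : Matrix (Fin d) (Fin d) ℂ) - P)ᴴ = 1 - P := by
      rw [Matrix.conjTranspose_sub, Matrix.conjTranspose_one, hPh.eq]
    rw [h1P]
    have hc : (1 - P) * W * (1 - P) = W - M • P := by
      calc (1 - P) * W * (1 - P) = (W - M • P) * (1 - P) := by
            rw [Matrix.sub_mul, Matrix.one_mul, hPW]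
        _ = W - M • P := by
            rw [Matrix.mul_sub, Matrix.mul_one, Matrix.sub_mul, hWP, smul_mul_assoc, hPproj]
            abel
    exact hc.symm
  have hGpsd : (W - M • P).PosSemidef := by
    rw [hG]
    exact hWpsd.mul_mul_conjTranspose_same (1 - P)
  have hρG : ρ * (W - M • P) = 0 := by
    rw [Matrix.mul_sub, hρW, mul_smul_comm, hρP, sub_self]
  refine ⟨part1, part2, W - M • P, hGpsd, ?_, by abel⟩
  rintro v ⟨y, rfl⟩
  refine LinearMap.mem_ker.mpr ?_
  show ρ *ᵥ ((W - M • P) *ᵥ y) = 0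
  rw [Matrix.mulVec_mulVec, hρG, Matrix.zero_mulVec]
end

section
/- Let F be a nonempty closed convex set of density matrices, let ρ be a density matrix whose support contains the support of some σ ∈ F, and let k > 1. Then the set {W Hermitian : 0 ⪯ W ⪯ 𝟙, ⟨ρ,W⟩ = 1, and ⟨W,σ'⟩ ≤ 1/k for all σ' ∈ F} is empty. (Consequently, exact distillation of any resourceful pure state from a state whose support contains a free state is impossible.) -/
open Matrix
open scoped ComplexOrder

lemma trace_re_zero {n : Type*} [Fintype n] [DecidableEq n] (C : Matrix n n ℂ)
    (h : ((Cᴴ * C).trace).re = 0) : C = 0 := by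
  have hre : ((Cᴴ * C).trace).re = ∑ i, ∑ j, Complex.normSq (C j i) := by
    simp [Matrix.trace, Matrix.mul_apply, Matrix.diag, Complex.re_sum,
      Matrix.conjTranspose_apply, Complex.normSq_eq_conj_mul_self, Complex.normSq_apply]
  rw [hre] at h
  ext j i
  have h1 : ∀ i ∈ Finset.univ, (0:ℝ) ≤ ∑ j, Complex.normSq (C j i) :=
    fun i _ => Finset.sum_nonneg fun j _ => Complex.normSq_nonneg _
  have h2 := (Finset.sum_eq_zero_iff_of_nonneg h1).mp h i (Finset.mem_univ i)
  have h3 := (Finset.sum_eq_zero_iff_of_nonneg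
    (fun j _ => Complex.normSq_nonneg (C j i))).mp h2 j (Finset.mem_univ j)
  simpa using Complex.normSq_eq_zero.mp h3

open scoped MatrixOrder

/-- Impossibility of exact distillation: if the support of ρ contains the support of
a free state, then no measurement operator achieves perfect fidelity while being a
valid witness with parameter k > 1. -/
theorem stmt7 {d : ℕ} (F : Set (Matrix (Fin d) (Fin d) ℂ))
    (hne : F.Nonempty) (hcl : IsClosed F) (hconv : Convex ℝ F)
    (hdens : ∀ σ' ∈ F, IsDensity σ')
    (ρ σ : Matrix (Fin d) (Fin d) ℂ) (hρ : IsDensity ρ) (hσF : σ ∈ F)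
    (hsupp : LinearMap.range σ.mulVecLin ≤ LinearMap.range ρ.mulVecLin)
    (k : ℝ) (hk : 1 < k) :
    {W : Matrix (Fin d) (Fin d) ℂ | W.IsHermitian ∧ W.PosSemidef ∧
      ((1 : Matrix (Fin d) (Fin d) ℂ) - W).PosSemidef ∧ ip ρ W = 1 ∧
      ∀ σ' ∈ F, ip W σ' ≤ 1 / k} = ∅ := by
  ext W
  simp only [Set.mem_setOf_eq, Set.mem_empty_iff_false, iff_false, not_and]
  intro hW hWpsd hApsd hip
  intro hbound
  set A := (1 : Matrix (Fin d) (Fin d) ℂ) - W with hAdef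
  obtain ⟨hρpsd, hρtr⟩ := hρ
  -- trace (A * ρ) has re 0
  have htr : ((A * ρ).trace).re = 0 := by
    have : A * ρ = ρ - W * ρ := by rw [hAdef]; noncomm_ring
    rw [this, Matrix.trace_sub, Matrix.trace_mul_comm]
    have : ((ρ * W).trace).re = 1 := hip
    simp [Complex.sub_re, hρtr, this]
  -- C := √A * √ρ
  set r := CFC.sqrt ρ with hr
  set a := CFC.sqrt A with ha
  set C := a * r with hC
  have hCtr : (Cᴴ * C).trace = (A * ρ).trace := by
    have hCH : Cᴴ = r * a := by
      rw [hC, Matrix.conjTranspose_mul, (CFC.sqrt_nonneg A).posSemidef.1, (CFC.sqrt_nonneg ρ).posSemidef.1]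
    rw [hCH, hC]
    have e1 : r * a * (a * r) = r * (a * a * r) := by noncomm_ring
    rw [e1, Matrix.trace_mul_comm, Matrix.mul_assoc (a*a) r r, ha, hr,
      CFC.sqrt_mul_sqrt_self A hApsd.nonneg, CFC.sqrt_mul_sqrt_self ρ hρpsd.nonneg]
  have hC0 : C = 0 := trace_re_zero C (by rw [hCtr]; exact htr)
  have hAρ : A * ρ = 0 := by
    calc A * ρ = a * (a * r) * r := by
          rw [← CFC.sqrt_mul_sqrt_self A hApsd.nonneg, ← CFC.sqrt_mul_sqrt_self ρ hρpsd.nonneg, ← hr, ← ha]; noncomm_ring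
      _ = 0 := by rw [← hC, hC0, Matrix.mul_zero, Matrix.zero_mul]
  -- A * σ = 0
  have hAσ : A * σ = 0 := by
    ext i j
    have hmem : σ.mulVec (Pi.single j 1) ∈ LinearMap.range ρ.mulVecLin :=
      hsupp ⟨Pi.single j 1, rfl⟩
    obtain ⟨y, hy⟩ := hmem
    have : (A * σ).mulVec (Pi.single j 1) = 0 := by
      rw [← Matrix.mulVec_mulVec]
      simp only [Matrix.mulVecLin_apply] at hy
      rw [← hy, Matrix.mulVec_mulVec, hAρ, Matrix.zero_mulVec]
    have := congrFun this i
    simpa [Matrix.mulVec_single_one] using this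
  have hWσ : W * σ = σ := by
    have : W * σ = σ - A * σ := by rw [hAdef]; noncomm_ring
    rw [this, hAσ, sub_zero]
  have hσtr := (hdens σ hσF).2
  have hipWσ : ip W σ = 1 := by
    rw [ip, hWσ, hσtr]; simp
  have := hbound σ hσF
  rw [hipWσ] at this
  have : (1:ℝ)/k < 1 := by
    rw [div_lt_one (by linarith)]; linarith
  linarith [hbound σ hσF, hipWσ ▸ hbound σ hσF]
end

section
/- Let F be a nonempty closed convex set of density matrices, let φ = |φ⟩⟨φ| be a pure state, δ ∈ density matrices, and W Hermitian with 0 ⪯ W ⪯ 𝟙. Define the linear map Λ(X) = ⟨X,W⟩·φ + ⟨X, 𝟙−W⟩·δ. Then Λ is completely positive and trace preserving. If moreover there exists λ ≥ 1 with δ ∈ F and (φ + (λ−1)δ)/λ ∈ F, and ⟨σ,W⟩ ≤ 1/λ for all σ ∈ F, then Λ maps F into F (Λ is resource non-generating), and Λ†(φ) = W. -/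
open Matrix
open scoped ComplexOrder
open Kronecker

lemma kron_conjTranspose {m n : Type*} [Fintype m] [Fintype n]
    (A : Matrix m m ℂ) (B : Matrix n n ℂ) : (A ⊗ₖ B)ᴴ = Aᴴ ⊗ₖ Bᴴ := by
  ext p q
  simp [conjTranspose_apply, kroneckerMap_apply]

lemma kron_psd {m n : Type*} [Fintype m] [Fintype n] [DecidableEq m] [DecidableEq n]
    {A : Matrix m m ℂ} {B : Matrix n n ℂ} (hA : A.PosSemidef) (hB : B.PosSemidef) :
    (A ⊗ₖ B).PosSemidef := by
  exact hA.kronecker hB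

lemma psd_trace_nonneg {n : Type*} [Fintype n] [DecidableEq n] {A : Matrix n n ℂ}
    (hA : A.PosSemidef) : 0 ≤ A.trace := by
  rw [Matrix.trace]
  refine Finset.sum_nonneg fun i _ => ?_
  have := hA.dotProduct_mulVec_nonneg (Pi.single i 1)
  simpa [dotProduct, Matrix.mulVec, Pi.single_apply] using this

open scoped MatrixOrder in
lemma psd_mul_trace_nonneg {n : Type*} [Fintype n] [DecidableEq n]
    {A B : Matrix n n ℂ} (hA : A.PosSemidef) (hB : B.PosSemidef) :
    0 ≤ (A * B).trace := by
  set S := CFC.sqrt A with hS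
  have h1 : A = S * S := (CFC.sqrt_mul_sqrt_self A hA.nonneg).symm
  have h2 : (A * B).trace = (S * B * S).trace := by
    conv_lhs => rw [h1]
    rw [Matrix.mul_assoc, trace_mul_comm]
  rw [h2]
  have hherm : S.IsHermitian := (CFC.sqrt_nonneg A).posSemidef.1
  have : (S * B * S).PosSemidef := by
    have := hB.mul_mul_conjTranspose_same S
    rwa [hherm.eq] at this
  exact psd_trace_nonneg this

lemma trace_stdBasisMatrix_mul {n : Type*} [Fintype n] [DecidableEq n] (i j : n)
    (M : Matrix n n ℂ) : (Matrix.single i j 1 * M).trace = M j i := by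
  simp [Matrix.trace, Matrix.diag, Matrix.mul_apply, Matrix.single,
    Finset.sum_ite_eq, ite_and]

lemma realsmul {n : Type*} [Fintype n] (r : ℝ) (M : Matrix n n ℂ) :
    ((r : ℂ)) • M = r • M := by
  ext i j
  simp [Matrix.smul_apply, Complex.real_smul]

/-- Choi matrix of a map on d×d matrices (CP ↔ Choi matrix PSD). -/
noncomputable def choi {d : ℕ} (Λ : Matrix (Fin d) (Fin d) ℂ → Matrix (Fin d) (Fin d) ℂ) :
    Matrix (Fin d × Fin d) (Fin d × Fin d) ℂ :=
  Matrix.of fun p q => Λ (Matrix.single p.1 q.1 1) p.2 q.2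

/-- A quantum channel: completely positive (PSD Choi matrix) and trace preserving. -/
def IsCPTP {d : ℕ} (Λ : Matrix (Fin d) (Fin d) ℂ →ₗ[ℂ] Matrix (Fin d) (Fin d) ℂ) : Prop :=
  (choi fun X => Λ X).PosSemidef ∧ ∀ X, (Λ X).trace = X.trace

/-- The measure-and-prepare map Λ(X) = Tr(XW)·φ + Tr(X(𝟙−W))·δ is CPTP;
given the robustness decomposition of φ via δ ∈ F and ⟨σ,W⟩ ≤ 1/l on F,
it is resource non-generating and its fidelity with φ dominates ⟨ρ,W⟩. -/
theorem stmt8 {d : ℕ} (F : Set (Matrix (Fin d) (Fin d) ℂ))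
    (hne : F.Nonempty) (hcl : IsClosed F) (hconv : Convex ℝ F)
    (hdens : ∀ σ ∈ F, IsDensity σ)
    (φ δ W : Matrix (Fin d) (Fin d) ℂ) (hφ : IsPure φ) (hδ : IsDensity δ)
    (hWh : W.IsHermitian) (hW0 : W.PosSemidef)
    (hW1 : ((1 : Matrix (Fin d) (Fin d) ℂ) - W).PosSemidef)
    (l : ℝ) (hl : 1 ≤ l) (hδF : δ ∈ F)
    (hmix : (1 / l) • (φ + (l - 1) • δ) ∈ F)
    (hWfeas : ∀ σ ∈ F, ip σ W ≤ 1 / l) :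
    (choi fun X => ((X * W).trace) • φ + ((X * (1 - W)).trace) • δ).PosSemidef ∧
    (∀ X : Matrix (Fin d) (Fin d) ℂ,
      (((X * W).trace) • φ + ((X * (1 - W)).trace) • δ).trace = X.trace) ∧
    (∀ σ ∈ F, ((σ * W).trace) • φ + ((σ * (1 - W)).trace) • δ ∈ F) ∧
    (∀ ρ : Matrix (Fin d) (Fin d) ℂ, IsDensity ρ →
      ip (((ρ * W).trace) • φ + ((ρ * (1 - W)).trace) • δ) φ ≥ ip ρ W) := by
  
  have hφd : IsDensity φ := hφ.1
  have hl0 : (0:ℝ) < l := lt_of_lt_of_le one_pos hl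
  refine ⟨?_, ?_, ?_, ?_⟩
  · -- CP: Choi matrix PSD
    have hchoi : (choi fun X => ((X * W).trace) • φ + ((X * (1 - W)).trace) • δ)
        = Wᵀ ⊗ₖ φ + (1 - W)ᵀ ⊗ₖ δ := by
      ext p q
      simp only [choi, Matrix.of_apply, Matrix.add_apply, Matrix.smul_apply,
        kroneckerMap_apply, trace_stdBasisMatrix_mul, Matrix.transpose_apply,
        smul_eq_mul]
    rw [hchoi]
    exact ((kron_psd hW0.transpose hφd.1).add (kron_psd hW1.transpose hδ.1))
  · -- TP
    intro X
    rw [trace_add, trace_smul, trace_smul, hφd.2, hδ.2, smul_eq_mul, smul_eq_mul,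
      mul_one, mul_one, ← trace_add, ← Matrix.mul_add]
    simp
  · -- RNG
    intro σ hσ
    obtain ⟨hσp, hσt⟩ := hdens σ hσ
    have ha0 : 0 ≤ (σ * W).trace := psd_mul_trace_nonneg hσp hW0
    have hb0 : 0 ≤ (σ * (1 - W)).trace := psd_mul_trace_nonneg hσp hW1
    have hab : (σ * W).trace + (σ * (1 - W)).trace = 1 := by
      rw [← trace_add, ← Matrix.mul_add]
      simp [hσt]
    set t : ℝ := ((σ * W).trace).re with ht
    have haim : ((σ * W).trace).im = 0 := ((Complex.le_def.mp ha0).2).symm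
    have haC : (σ * W).trace = (t : ℂ) := by
      apply Complex.ext <;> simp [haim, ht]
    have hbC : (σ * (1 - W)).trace = ((1 - t : ℝ) : ℂ) := by
      have : (σ * (1 - W)).trace = 1 - (σ * W).trace := by linear_combination hab
      rw [this, haC]; push_cast; ring
    have ht0 : 0 ≤ t := (Complex.le_def.mp ha0).1
    have htl : t ≤ 1 / l := hWfeas σ hσ
    have hc0 : (0:ℝ) ≤ t * l := mul_nonneg ht0 hl0.le
    have hc1 : t * l ≤ 1 := by
      have := (div_le_div_iff₀ hl0 hl0).mp (le_refl (1/l))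
      calc t * l ≤ (1/l) * l := by nlinarith
        _ = 1 := by field_simp
    have hmem := hconv hmix hδF hc0 (by linarith : (0:ℝ) ≤ 1 - t * l)
      (by ring : t * l + (1 - t * l) = 1)
    have heq : (t * l) • ((1 / l) • (φ + (l - 1) • δ)) + (1 - t * l) • δ
        = ((σ * W).trace) • φ + ((σ * (1 - W)).trace) • δ := by
      rw [haC, hbC, realsmul, realsmul, smul_smul, smul_add, smul_smul, add_assoc,
        ← add_smul]
      congr 1
      · congr 1
        field_simp
      · congr 1
        field_simp
        ring
    rw [← heq]
    exact hmem
  · -- fidelity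
    intro ρ hρ
    have hb0 : 0 ≤ (ρ * (1 - W)).trace := psd_mul_trace_nonneg hρ.1 hW1
    have hc0 : 0 ≤ (δ * φ).trace := psd_mul_trace_nonneg hδ.1 hφd.1
    have key : ((((ρ * W).trace) • φ + ((ρ * (1 - W)).trace) • δ) * φ).trace
        = (ρ * W).trace + ((ρ * (1 - W)).trace) * (δ * φ).trace := by
      rw [Matrix.add_mul, Matrix.smul_mul, Matrix.smul_mul, hφ.2, trace_add,
        trace_smul, trace_smul, hφd.2, smul_eq_mul, smul_eq_mul, mul_one]
    have hprod : 0 ≤ ((ρ * (1 - W)).trace) * (δ * φ).trace := mul_nonneg hb0 hc0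
    have hre : 0 ≤ (((ρ * (1 - W)).trace) * (δ * φ).trace).re :=
      (Complex.le_def.mp hprod).1
    show ip ρ W ≤ _
    unfold ip
    rw [key, Complex.add_re]
    linarith
end

section
/- Let F be a nonempty closed convex set of density matrices, and let O be the set of linear maps Λ on Hermitian matrices that are completely positive, trace preserving, and satisfy Λ(σ) ∈ F for all σ ∈ F. For a pure state φ define Rmin(φ)^{-1} = max_{σ∈F}⟨φ,σ⟩, assumed < 1. Then for any density matrix ρ and any Λ ∈ O, ⟨Λ(ρ),φ⟩ ≤ G(ρ; Rmin(φ)), where G(ρ;k) := sup{⟨ρ,W⟩ : 0 ⪯ W ⪯ 𝟙, ⟨W,σ⟩ ≤ 1/k ∀σ∈F}. -/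
open Matrix
open scoped ComplexOrder

/-- Fidelity quantity G(ρ;k). -/
noncomputable def Gfid {d : ℕ} (F : Set (Matrix (Fin d) (Fin d) ℂ))
    (ρ : Matrix (Fin d) (Fin d) ℂ) (k : ℝ) : ℝ :=
  sSup {x : ℝ | ∃ W : Matrix (Fin d) (Fin d) ℂ, W.PosSemidef ∧
    ((1 : Matrix (Fin d) (Fin d) ℂ) - W).PosSemidef ∧
    (∀ σ ∈ F, ip W σ ≤ 1 / k) ∧ x = ip ρ W}

noncomputable def adjm {d : ℕ} (Λ : Matrix (Fin d) (Fin d) ℂ →ₗ[ℂ] Matrix (Fin d) (Fin d) ℂ)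
    (A : Matrix (Fin d) (Fin d) ℂ) : Matrix (Fin d) (Fin d) ℂ :=
  Matrix.of fun i j => ((Λ (Matrix.single j i 1)) * A).trace

lemma trace_adjm {d : ℕ} (Λ : Matrix (Fin d) (Fin d) ℂ →ₗ[ℂ] Matrix (Fin d) (Fin d) ℂ)
    (A X : Matrix (Fin d) (Fin d) ℂ) :
    ((Λ X) * A).trace = (X * adjm Λ A).trace := by
  conv_lhs => rw [matrix_eq_sum_single X]
  have : ∀ i j : Fin d, Matrix.single i j (X i j) = (X i j) • Matrix.single i j 1 := by
    intro i j; rw [smul_single]; norm_num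
  simp_rw [this, map_sum, _root_.map_smul, Finset.sum_mul, Matrix.smul_mul, trace_sum, trace_smul]
  simp [Matrix.trace, Matrix.mul_apply, adjm, Matrix.diag, Finset.mul_sum]

lemma adjm_one {d : ℕ} (Λ : Matrix (Fin d) (Fin d) ℂ →ₗ[ℂ] Matrix (Fin d) (Fin d) ℂ)
    (hTP : ∀ X, (Λ X).trace = X.trace) : adjm Λ 1 = 1 := by
  ext i j
  show ((Λ (Matrix.single j i 1)) * 1).trace = _
  rw [mul_one, hTP]
  simp [Matrix.trace, Matrix.diag, Matrix.single, Matrix.one_apply]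
  by_cases h : i = j
  · subst h
    have : (Finset.filter (fun x => i = x) Finset.univ) = {i} := by
      ext x; simp [eq_comm]
    simp [this]
  · have : (Finset.filter (fun x => j = x ∧ i = x) Finset.univ) = ∅ := by
      ext x; simp; rintro rfl hix; exact h hix
    simp [this, h]

lemma adjm_sub {d : ℕ} (Λ : Matrix (Fin d) (Fin d) ℂ →ₗ[ℂ] Matrix (Fin d) (Fin d) ℂ)
    (A B : Matrix (Fin d) (Fin d) ℂ) : adjm Λ (A - B) = adjm Λ A - adjm Λ B := by
  ext i j
  simp [adjm, Matrix.mul_sub, Matrix.sub_apply]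

lemma quad_as_trace {d : ℕ} (W : Matrix (Fin d) (Fin d) ℂ) (v : Fin d → ℂ) :
    star v ⬝ᵥ W *ᵥ v = (W * vecMulVec v (star v)).trace := by
  simp [dotProduct, mulVec, Matrix.trace, Matrix.diag, Matrix.mul_apply, vecMulVec_apply,
    Finset.mul_sum, Finset.sum_mul]
  refine Finset.sum_congr rfl fun i _ => Finset.sum_congr rfl fun j _ => ?_
  ring

lemma lam_expand {d : ℕ} (Λ : Matrix (Fin d) (Fin d) ℂ →ₗ[ℂ] Matrix (Fin d) (Fin d) ℂ)
    (X : Matrix (Fin d) (Fin d) ℂ) :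
    Λ X = ∑ i, ∑ j, X i j • Λ (Matrix.single i j 1) := by
  conv_lhs => rw [matrix_eq_sum_single X]
  have : ∀ i j : Fin d, Matrix.single i j (X i j)
      = (X i j) • Matrix.single i j 1 := by
    intro i j; rw [smul_single]; norm_num
  simp_rw [this, map_sum, _root_.map_smul]

lemma psd_trace_nonneg_s9 {d : ℕ} {M : Matrix (Fin d) (Fin d) ℂ} (hM : M.PosSemidef) :
    0 ≤ M.trace := by
  rw [Matrix.trace]
  apply Finset.sum_nonneg
  intro i _
  have h := hM.dotProduct_mulVec_nonneg (Pi.single i 1)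
  have : star (Pi.single i 1 : Fin d → ℂ) ⬝ᵥ M *ᵥ Pi.single i 1 = M.diag i := by
    simp [dotProduct, mulVec, Pi.single_apply, Matrix.diag]
  rwa [this] at h

lemma trace_psd_mul_nonneg {d : ℕ} {A B : Matrix (Fin d) (Fin d) ℂ}
    (hA : A.PosSemidef) (hB : B.PosSemidef) : 0 ≤ (A * B).trace := by
  open scoped MatrixOrder in obtain ⟨C, rfl⟩ := CStarAlgebra.nonneg_iff_eq_star_mul_self.mp hB.nonneg
  rw [← Matrix.mul_assoc, Matrix.trace_mul_comm]
  have hP : (C * (A * Cᴴ)).PosSemidef := by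
    have := hA.mul_mul_conjTranspose_same C
    rwa [Matrix.mul_assoc] at this
  exact psd_trace_nonneg_s9 hP

lemma choi_herm_entry {d : ℕ} (Λ : Matrix (Fin d) (Fin d) ℂ →ₗ[ℂ] Matrix (Fin d) (Fin d) ℂ)
    (herm : (choi fun X => Λ X).IsHermitian) (i j a b : Fin d) :
    (starRingEnd ℂ) (Λ (Matrix.single i j 1) a b)
      = Λ (Matrix.single j i 1) b a := by
  have := congrFun (congrFun herm ((j, b) : Fin d × Fin d)) ((i, a) : Fin d × Fin d)
  simpa [choi, Matrix.conjTranspose_apply] using this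

lemma sum4_perm {α : Type*} [Fintype α] {M : Type*} [AddCommMonoid M]
    (f : α → α → α → α → M) :
    ∑ a, ∑ b, ∑ i, ∑ j, f a b i j = ∑ i, ∑ a, ∑ j, ∑ b, f a b i j :=
  calc ∑ a, ∑ b, ∑ i, ∑ j, f a b i j
      = ∑ a, ∑ i, ∑ b, ∑ j, f a b i j :=
        Finset.sum_congr rfl fun a _ => Finset.sum_comm
    _ = ∑ i, ∑ a, ∑ b, ∑ j, f a b i j := Finset.sum_comm
    _ = ∑ i, ∑ a, ∑ j, ∑ b, f a b i j :=
        Finset.sum_congr rfl fun i _ => Finset.sum_congr rfl fun a _ => Finset.sum_comm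

lemma lam_vecMulVec_psd {d : ℕ} (Λ : Matrix (Fin d) (Fin d) ℂ →ₗ[ℂ] Matrix (Fin d) (Fin d) ℂ)
    (hC : (choi fun X => Λ X).PosSemidef) (v : Fin d → ℂ) :
    (Λ (vecMulVec v (star v))).PosSemidef := by
  refine Matrix.PosSemidef.of_dotProduct_mulVec_nonneg ?_ ?_
  · ext a b
    rw [Matrix.conjTranspose_apply, lam_expand Λ (vecMulVec v (star v))]
    simp only [Matrix.sum_apply, Matrix.smul_apply, map_sum, _root_.map_mul, smul_eq_mul,
      vecMulVec_apply, Pi.star_apply, RCLike.star_def, Complex.conj_conj]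
    rw [Finset.sum_comm]
    refine Finset.sum_congr rfl fun i _ => Finset.sum_congr rfl fun j _ => ?_
    rw [choi_herm_entry Λ hC.1 j i b a]
    ring
  · intro u
    have key : star u ⬝ᵥ (Λ (vecMulVec v (star v))) *ᵥ u
        = star (fun p : Fin d × Fin d => (starRingEnd ℂ) (v p.1) * u p.2)
            ⬝ᵥ (choi fun X => Λ X) *ᵥ (fun p : Fin d × Fin d => (starRingEnd ℂ) (v p.1) * u p.2) := by
      rw [lam_expand Λ (vecMulVec v (star v))]
      simp only [dotProduct, mulVec, choi, Matrix.of_apply, Pi.star_apply, RCLike.star_def,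
        Matrix.sum_apply, Matrix.smul_apply, smul_eq_mul, vecMulVec_apply,
        Fintype.sum_prod_type, _root_.map_mul, Complex.conj_conj,
        Finset.mul_sum, Finset.sum_mul]
      refine (sum4_perm _).trans ?_
      refine Finset.sum_congr rfl fun i _ => Finset.sum_congr rfl fun a _ =>
        Finset.sum_congr rfl fun j _ => Finset.sum_congr rfl fun b _ => ?_
      ring
    rw [key]
    exact hC.dotProduct_mulVec_nonneg _

lemma adjm_isHermitian {d : ℕ} (Λ : Matrix (Fin d) (Fin d) ℂ →ₗ[ℂ] Matrix (Fin d) (Fin d) ℂ)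
    (hC : (choi fun X => Λ X).PosSemidef) {A : Matrix (Fin d) (Fin d) ℂ}
    (hA : A.IsHermitian) : (adjm Λ A).IsHermitian := by
  ext i j
  rw [Matrix.conjTranspose_apply]
  show (starRingEnd ℂ) (((Λ (Matrix.single i j 1)) * A).trace)
      = ((Λ (Matrix.single j i 1)) * A).trace
  simp only [Matrix.trace, Matrix.diag, Matrix.mul_apply, map_sum, _root_.map_mul]
  rw [Finset.sum_comm]
  refine Finset.sum_congr rfl fun a _ => Finset.sum_congr rfl fun b _ => ?_
  rw [choi_herm_entry Λ hC.1 i j]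
  congr 1
  conv_rhs => rw [← hA]
  simp [Matrix.conjTranspose_apply]

lemma adjm_posSemidef {d : ℕ} (Λ : Matrix (Fin d) (Fin d) ℂ →ₗ[ℂ] Matrix (Fin d) (Fin d) ℂ)
    (hC : (choi fun X => Λ X).PosSemidef) {A : Matrix (Fin d) (Fin d) ℂ}
    (hA : A.PosSemidef) : (adjm Λ A).PosSemidef := by
  refine Matrix.PosSemidef.of_dotProduct_mulVec_nonneg (adjm_isHermitian Λ hC hA.1) fun v => ?_
  rw [quad_as_trace, Matrix.trace_mul_comm, ← trace_adjm]
  exact trace_psd_mul_nonneg (lam_vecMulVec_psd Λ hC v) hA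


/-- Upper bound on the achievable fidelity under resource non-generating channels:
⟨Λ(ρ),φ⟩ ≤ G(ρ; Rmin(φ)). -/
theorem stmt9 {d : ℕ} (F : Set (Matrix (Fin d) (Fin d) ℂ))
    (hne : F.Nonempty) (hcl : IsClosed F) (hconv : Convex ℝ F)
    (hdens : ∀ σ ∈ F, IsDensity σ)
    (φ : Matrix (Fin d) (Fin d) ℂ) (hφ : IsPure φ)
    (r : ℝ) (hr : 1 < r) (hfeas : ∀ σ ∈ F, ip φ σ ≤ 1 / r) (hach : ∃ σ ∈ F, ip φ σ = 1 / r)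
    (Λ : Matrix (Fin d) (Fin d) ℂ →ₗ[ℂ] Matrix (Fin d) (Fin d) ℂ)
    (hΛ : IsCPTP Λ) (hΛF : ∀ σ ∈ F, Λ σ ∈ F)
    (ρ : Matrix (Fin d) (Fin d) ℂ) (hρ : IsDensity ρ) :
    ip (Λ ρ) φ ≤ Gfid F ρ r := by
  set W := adjm Λ φ with hW
  have hWpsd : W.PosSemidef := adjm_posSemidef Λ hΛ.1 hφ.1.1
  have h1φ : ((1 : Matrix (Fin d) (Fin d) ℂ) - φ).PosSemidef := by
    have hherm : φ.IsHermitian := hφ.1.1.1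
    convert posSemidef_conjTranspose_mul_self (1 - φ) using 1
    rw [conjTranspose_sub, conjTranspose_one, hherm, sub_mul, mul_sub, mul_sub]
    simp only [one_mul, mul_one]
    rw [hφ.2]
    abel
  have h1W : ((1 : Matrix (Fin d) (Fin d) ℂ) - W).PosSemidef := by
    have : (1 : Matrix (Fin d) (Fin d) ℂ) - W = adjm Λ (1 - φ) := by
      rw [adjm_sub, adjm_one Λ hΛ.2]
    rw [this]
    exact adjm_posSemidef Λ hΛ.1 h1φ
  have hfeasW : ∀ σ ∈ F, ip W σ ≤ 1 / r := by
    intro σ hσ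
    have : ip W σ = ip φ (Λ σ) := by
      unfold ip
      rw [Matrix.trace_mul_comm, ← trace_adjm, Matrix.trace_mul_comm]
    rw [this]
    exact hfeas _ (hΛF σ hσ)
  have hval : ip (Λ ρ) φ = ip ρ W := by
    unfold ip
    rw [trace_adjm]
  have hbdd : BddAbove {x : ℝ | ∃ W' : Matrix (Fin d) (Fin d) ℂ, W'.PosSemidef ∧
      ((1 : Matrix (Fin d) (Fin d) ℂ) - W').PosSemidef ∧
      (∀ σ ∈ F, ip W' σ ≤ 1 / r) ∧ x = ip ρ W'} := by
    refine ⟨1, fun x hx => ?_⟩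
    obtain ⟨W', hpsd', h1', _, rfl⟩ := hx
    have h0 : 0 ≤ ((ρ * ((1 : Matrix (Fin d) (Fin d) ℂ) - W')).trace).re := by
      have := trace_psd_mul_nonneg hρ.1 h1'
      simpa using (Complex.le_def.mp this).1
    have hexp : (ρ * ((1 : Matrix (Fin d) (Fin d) ℂ) - W')).trace
        = ρ.trace - (ρ * W').trace := by
      rw [Matrix.mul_sub, Matrix.trace_sub, mul_one]
    rw [hexp, Complex.sub_re, hρ.2, Complex.one_re] at h0
    simpa [ip] using by linarith [h0]
  rw [hval, Gfid]
  exact le_csSup hbdd ⟨W, hWpsd, h1W, hfeasW, rfl⟩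
end

section
/- Let F be a nonempty closed convex set of density matrices and define the affine robustness by its dual form Rmax^•(ρ) = sup{⟨ρ,W⟩ : W ⪰ 0, ⟨W,σ⟩ = 1 ∀σ∈F}, and the generalized robustness Rmax(ρ) = sup{⟨ρ,W⟩ : W ⪰ 0, ⟨W,σ⟩ ≤ 1 ∀σ∈F}. Then Rmax^•(ρ) = Rmax(ρ) for every density matrix ρ if and only if the resource theory is affine, i.e. F = aff(F) ∩ (density matrices). -/
open Matrix
open scoped ComplexOrder

/-- Generalized robustness relative to a set S, primal form. -/
noncomputable def RmaxP {d : ℕ} (S : Set (Matrix (Fin d) (Fin d) ℂ))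
    (ρ : Matrix (Fin d) (Fin d) ℂ) : ℝ :=
  sInf {l : ℝ | 1 ≤ l ∧ ∃ ω : Matrix (Fin d) (Fin d) ℂ, IsDensity ω ∧
    (1 / l) • (ρ + (l - 1) • ω) ∈ S}

lemma psd_real_smul {n : Type*} [Fintype n] {M : Matrix n n ℂ} (h : M.PosSemidef)
    {r : ℝ} (hr : 0 ≤ r) : (r • M).PosSemidef := by
  refine PosSemidef.of_dotProduct_mulVec_nonneg ?_ ?_
  · rw [Matrix.IsHermitian, conjTranspose_smul, star_trivial, h.1]
  · intro x
    rw [smul_mulVec, dotProduct_smul, Complex.real_smul]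
    exact mul_nonneg (Complex.zero_le_real.2 hr) (h.dotProduct_mulVec_nonneg x)

lemma density_abs_le_one {n : Type*} [Fintype n] [DecidableEq n] {ω : Matrix n n ℂ}
    (h : IsDensity ω) (i j : n) : ‖ω i j‖ ≤ 1 := by
  obtain ⟨⟨hH, hP⟩, htr⟩ := (show (ω.IsHermitian ∧ ∀ x, 0 ≤ star x ⬝ᵥ (ω *ᵥ x)) ∧ ω.trace = 1
    from ⟨posSemidef_iff_dotProduct_mulVec.mp h.1, h.2⟩)
  have hdiag : ∀ k, (0:ℂ) ≤ ω k k := by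
    intro k
    have := hP (Pi.single k 1)
    simpa [← Pi.single_star, single_dotProduct] using this
  have hre : ∀ k, 0 ≤ (ω k k).re := fun k => (Complex.le_def.1 (hdiag k)).1
  have hsum : ∑ k, (ω k k).re = 1 := by
    have := congrArg Complex.re htr
    simpa [Matrix.trace, Matrix.diag, Complex.re_sum] using this
  have hk1 : ∀ k, (ω k k).re ≤ 1 := by
    intro k
    rw [← hsum]
    exact Finset.single_le_sum (f := fun k => (ω k k).re) (fun k _ => hre k) (Finset.mem_univ k)
  by_cases ha : ω i j = 0
  · simp [ha]
  · set a := ω i j with haa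
    set A : ℝ := ‖a‖ with hA
    have hA0 : 0 < A := norm_pos_iff.mpr ha
    set c : ℂ := -(a / A) with hc
    have hq0 := hP (Pi.single i c + Pi.single j 1)
    have hq : star (Pi.single i c + Pi.single j (1:ℂ)) ⬝ᵥ
        (ω *ᵥ (Pi.single i c + Pi.single j 1)) =
        (starRingEnd ℂ) c * (ω i i * c + ω i j) + (ω j i * c + ω j j) := by
      simp [star_add, ← Pi.single_star, mulVec_add, add_dotProduct, single_dotProduct,
        Pi.add_apply]
      ring
    rw [hq] at hq0
    have hji : ω j i = (starRingEnd ℂ) a := by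
      rw [haa, ← hH.apply j i, Complex.star_def]
    have hcc : (starRingEnd ℂ) c = -((starRingEnd ℂ) a / A) := by
      simp [hc, Complex.conj_ofReal]
    have hna : (starRingEnd ℂ) a * a = (A:ℂ)^2 := by
      rw [mul_comm, Complex.mul_conj]
      norm_cast
      rw [Complex.sq_norm]
    have hAne : (A:ℂ) ≠ 0 := by exact_mod_cast hA0.ne'
    have hq2 : (starRingEnd ℂ) c * (ω i i * c + ω i j) + (ω j i * c + ω j j)
        = ω i i * ((starRingEnd ℂ) a * a) / (A:ℂ)^2 - 2 * ((starRingEnd ℂ) a * a) / A + ω j j := by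
      rw [hji, hcc, hc]
      field_simp
      ring
    rw [hq2, hna] at hq0
    have : ω i i * (A:ℂ)^2 / (A:ℂ)^2 - 2 * (A:ℂ)^2 / A + ω j j
        = ω i i + ω j j - 2 * A := by
      field_simp
      ring
    rw [this] at hq0
    have hr := (Complex.le_def.1 hq0).1
    simp [Complex.add_re, Complex.sub_re, Complex.ofReal_re] at hr
    have h1 := hk1 i
    have h2 := hk1 j
    linarith

lemma density_smul_comb {d : ℕ} {ρ ω : Matrix (Fin d) (Fin d) ℂ} {l : ℝ}
    (hρ : IsDensity ρ) (hω : IsDensity ω) (hl : 1 ≤ l) :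
    IsDensity ((1 / l) • (ρ + (l - 1) • ω)) := by
  have hl0 : (0:ℝ) < l := lt_of_lt_of_le one_pos hl
  constructor
  · exact psd_real_smul (hρ.1.add (psd_real_smul hω.1 (by linarith))) (by positivity)
  · rw [Matrix.trace_smul, Matrix.trace_add, Matrix.trace_smul, hρ.2, hω.2]
    rw [Complex.real_smul, Complex.real_smul]
    have : (l:ℂ) ≠ 0 := by exact_mod_cast hl0.ne'
    push_cast
    field_simp
    ring

/-- The affine robustness equals the generalized robustness on all states iff
the resource theory is affine. -/
theorem stmt12 {d : ℕ} (F : Set (Matrix (Fin d) (Fin d) ℂ))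
    (hne : F.Nonempty) (hcl : IsClosed F) (hconv : Convex ℝ F)
    (hdens : ∀ σ ∈ F, IsDensity σ) :
    (∀ ρ : Matrix (Fin d) (Fin d) ℂ, IsDensity ρ →
        RmaxP (affineSpan ℝ F : Set (Matrix (Fin d) (Fin d) ℂ)) ρ = RmaxP F ρ) ↔
      F = (affineSpan ℝ F : Set (Matrix (Fin d) (Fin d) ℂ)) ∩
        {ρ : Matrix (Fin d) (Fin d) ℂ | IsDensity ρ} := by
  constructor
  · intro h
    apply Set.Subset.antisymm
    · intro σ hσ
      exact ⟨subset_affineSpan ℝ F hσ, hdens σ hσ⟩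
    · rintro ρ ⟨hρa, hρd⟩
      obtain ⟨σ0, hσ0⟩ := hne
      have hω0 : IsDensity σ0 := hdens σ0 hσ0
      have h1mem : (1:ℝ) ∈ {l : ℝ | 1 ≤ l ∧ ∃ ω : Matrix (Fin d) (Fin d) ℂ, IsDensity ω ∧
          (1 / l) • (ρ + (l - 1) • ω) ∈ (affineSpan ℝ F : Set (Matrix (Fin d) (Fin d) ℂ))} := by
        refine ⟨le_refl 1, σ0, hω0, ?_⟩
        simpa using hρa
      have haff1 : RmaxP (affineSpan ℝ F : Set (Matrix (Fin d) (Fin d) ℂ)) ρ = 1 := by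
        unfold RmaxP
        exact le_antisymm (csInf_le ⟨1, fun x hx => hx.1⟩ h1mem)
          (le_csInf ⟨1, h1mem⟩ fun x hx => hx.1)
      set S := {l : ℝ | 1 ≤ l ∧ ∃ ω : Matrix (Fin d) (Fin d) ℂ, IsDensity ω ∧
          (1 / l) • (ρ + (l - 1) • ω) ∈ F} with hS
      have hF1 : sInf S = 1 := (h ρ hρd).symm.trans haff1
      have hSne : S.Nonempty := by
        by_contra hc
        rw [Set.not_nonempty_iff_eq_empty] at hc
        rw [hc, Real.sInf_empty] at hF1
        norm_num at hF1
      have hseq : ∀ n : ℕ, ∃ l, l ∈ S ∧ l < 1 + 1/(n+1) := by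
        intro n
        have hpos : (0:ℝ) < 1/(n+1) := by positivity
        have hlt : sInf S < 1 + 1/(n+1) := by rw [hF1]; linarith
        exact exists_lt_of_csInf_lt hSne hlt
      choose l hlS hlub using hseq
      have hl1 : ∀ n, 1 ≤ l n := fun n => (hlS n).1
      choose ω hωd hωF using fun n => (hlS n).2
      set x : ℕ → Matrix (Fin d) (Fin d) ℂ :=
        fun n => (1/(l n)) • (ρ + (l n - 1) • ω n) with hx
      have htend : Filter.Tendsto x Filter.atTop (nhds ρ) := by
        refine tendsto_pi_nhds.2 fun i => tendsto_pi_nhds.2 fun j => ?_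
        have hb : ∀ n, dist (x n i j) (ρ i j) ≤ (1/(n+1)) * (‖ρ i j‖ + 1) := by
          intro n
          have hln : (0:ℝ) < l n := lt_of_lt_of_le one_pos (hl1 n)
          have h1l : 1/(l n) ≤ 1 := by rw [div_le_one hln]; exact hl1 n
          have hxe : x n i j - ρ i j = ((1/(l n) - 1 : ℝ):ℂ) * ρ i j
              + ((1/(l n) * (l n - 1) : ℝ):ℂ) * ω n i j := by
            simp only [hx, Matrix.smul_apply, Matrix.add_apply, Complex.real_smul]
            push_cast
            ring
          rw [Complex.dist_eq, hxe]
          have hinv : 1/(l n) * l n = 1 := one_div_mul_cancel hln.ne'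
          have e1 : |1/(l n) - 1| ≤ l n - 1 := by
            rw [abs_of_nonpos (by linarith)]
            nlinarith [sq_nonneg (l n - 1), hinv, hln, mul_pos hln hln]
          have e2 : |1/(l n) * (l n - 1)| ≤ l n - 1 := by
            rw [abs_of_nonneg (mul_nonneg (by positivity) (by linarith [hl1 n]))]
            nlinarith [hl1 n, hinv, hln]
          calc ‖_‖
              ≤ ‖((1/(l n) - 1 : ℝ):ℂ) * ρ i j‖
                + ‖((1/(l n) * (l n - 1) : ℝ):ℂ) * ω n i j‖ :=
                norm_add_le _ _
            _ = |1/(l n) - 1| * ‖ρ i j‖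
                + |1/(l n) * (l n - 1)| * ‖ω n i j‖ := by
                simp only [norm_mul, Complex.norm_real, Real.norm_eq_abs, abs_mul]
            _ ≤ (l n - 1) * ‖ρ i j‖ + (l n - 1) * 1 := by
                have h3 := density_abs_le_one (hωd n) i j
                have h4 := norm_nonneg (ρ i j)
                have h5 := norm_nonneg (ω n i j)
                have h6 := abs_nonneg (1/(l n) * (l n - 1))
                nlinarith
            _ = (l n - 1) * (‖ρ i j‖ + 1) := by ring
            _ ≤ (1/(n+1)) * (‖ρ i j‖ + 1) := by
                have := hlub n
                have h4 := norm_nonneg (ρ i j)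
                nlinarith
        have hg : Filter.Tendsto (fun n : ℕ => (1/(n+1:ℝ)) * (‖ρ i j‖ + 1))
            Filter.atTop (nhds 0) := by
          have := (tendsto_one_div_add_atTop_nhds_zero_nat (𝕜 := ℝ)).mul_const (‖ρ i j‖ + 1)
          simpa using this
        exact tendsto_iff_dist_tendsto_zero.2 (squeeze_zero (fun n => dist_nonneg) hb hg)
      exact hcl.mem_of_tendsto htend (Filter.Eventually.of_forall hωF)
  · intro hFeq ρ hρ
    have hsets : {l : ℝ | 1 ≤ l ∧ ∃ ω : Matrix (Fin d) (Fin d) ℂ, IsDensity ω ∧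
          (1 / l) • (ρ + (l - 1) • ω) ∈ (affineSpan ℝ F : Set (Matrix (Fin d) (Fin d) ℂ))}
        = {l : ℝ | 1 ≤ l ∧ ∃ ω : Matrix (Fin d) (Fin d) ℂ, IsDensity ω ∧
          (1 / l) • (ρ + (l - 1) • ω) ∈ F} := by
      ext l
      constructor
      · rintro ⟨hl, ω, hω, hmem⟩
        refine ⟨hl, ω, hω, ?_⟩
        rw [hFeq]
        exact ⟨hmem, density_smul_comb hρ hω hl⟩
      · rintro ⟨hl, ω, hω, hmem⟩
        exact ⟨hl, ω, hω, subset_affineSpan ℝ F hmem⟩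
    unfold RmaxP
    rw [hsets]
end
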